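/- The supremum of min{z/y, y/x, 1 + (y² − x²)/z²} over all triples 0 < x < y < z with z < x + y equals √2, and the supremum is not attained; moreover the set of values of this minimum over all such triples is exactly the open interval (1, √2). -/

import Mathlib

theorem stmt_15 :
    {m : ℝ | ∃ x y z : ℝ, 0 < x ∧ x < y ∧ y < z ∧ z < x + y ∧
        m = min (z / y) (min (y / x) (1 + (y ^ 2 - x ^ 2) / z ^ 2))} =
      Set.Ioo 1 (Real.sqrt 2) ∧
    IsLUB {m : ℝ | ∃ x y z : ℝ, 0 < x ∧ x < y ∧ y < z ∧ z < x + y ∧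
        m = min (z / y) (min (y / x) (1 + (y ^ 2 - x ^ 2) / z ^ 2))} (Real.sqrt 2) ∧
    Real.sqrt 2 ∉ {m : ℝ | ∃ x y z : ℝ, 0 < x ∧ x < y ∧ y < z ∧ z < x + y ∧
        m = min (z / y) (min (y / x) (1 + (y ^ 2 - x ^ 2) / z ^ 2))} := by
  have hs2 : (Real.sqrt 2) ^ 2 = 2 := Real.sq_sqrt (by norm_num)
  have hs0 : (0:ℝ) ≤ Real.sqrt 2 := Real.sqrt_nonneg 2
  have hs1 : (1:ℝ) < Real.sqrt 2 := by nlinarith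
  have hset : {m : ℝ | ∃ x y z : ℝ, 0 < x ∧ x < y ∧ y < z ∧ z < x + y ∧
      m = min (z / y) (min (y / x) (1 + (y ^ 2 - x ^ 2) / z ^ 2))} =
      Set.Ioo 1 (Real.sqrt 2) := by
    ext m
    simp only [Set.mem_setOf_eq, Set.mem_Ioo]
    constructor
    · rintro ⟨x, y, z, hx, hxy, hyz, hz, rfl⟩
      have hy : 0 < y := hx.trans hxy
      have hz0 : 0 < z := hy.trans hyz
      constructor
      · refine lt_min ?_ (lt_min ?_ ?_)
        · exact (one_lt_div hy).2 hyz
        · exact (one_lt_div hx).2 hxy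
        · have hp : 0 < (y ^ 2 - x ^ 2) / z ^ 2 :=
            div_pos (by nlinarith) (by positivity)
          linarith
      · by_contra hcon
        push_neg at hcon
        have h1 : Real.sqrt 2 ≤ z / y := hcon.trans (min_le_left _ _)
        have h2 : Real.sqrt 2 ≤ y / x :=
          hcon.trans ((min_le_right _ _).trans (min_le_left _ _))
        have h3 : Real.sqrt 2 ≤ 1 + (y ^ 2 - x ^ 2) / z ^ 2 :=
          hcon.trans ((min_le_right _ _).trans (min_le_right _ _))
        rw [le_div_iff₀ hy] at h1
        rw [le_div_iff₀ hx] at h2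
        have h3' : (Real.sqrt 2 - 1) * z ^ 2 ≤ y ^ 2 - x ^ 2 := by
          have h4 : Real.sqrt 2 - 1 ≤ (y ^ 2 - x ^ 2) / z ^ 2 := by linarith
          rwa [le_div_iff₀ (by positivity : (0:ℝ) < z ^ 2)] at h4
        -- z² ≥ 2y²
        have hz2 : 2 * y ^ 2 ≤ z ^ 2 := by
          nlinarith [mul_self_le_mul_self (by positivity : (0:ℝ) ≤ Real.sqrt 2 * y) h1]
        -- x > (√2 - 1) y from triangle inequality
        have hxgt : (Real.sqrt 2 - 1) * y < x := by nlinarith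
        have hx2 : ((Real.sqrt 2 - 1) * y) ^ 2 < x ^ 2 := by
          nlinarith [mul_self_lt_mul_self (by nlinarith : (0:ℝ) ≤ (Real.sqrt 2 - 1) * y) hxgt]
        nlinarith [mul_le_mul_of_nonneg_left hz2 (by nlinarith : (0:ℝ) ≤ Real.sqrt 2 - 1)]
    · rintro ⟨hm1, hm2⟩
      have hm0 : 0 < m := by linarith
      have hmsq : m ^ 2 < 2 := by nlinarith
      by_cases hc : m ^ 4 ≤ m + 1
      · refine ⟨1, m, m ^ 2, one_pos, hm1, by nlinarith, by nlinarith, ?_⟩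
        have e1 : m ^ 2 / m = m := by
          field_simp
        have e3 : m ≤ 1 + (m ^ 2 - 1 ^ 2) / (m ^ 2) ^ 2 := by
          have h4 : m - 1 ≤ (m ^ 2 - 1 ^ 2) / (m ^ 2) ^ 2 := by
            rw [le_div_iff₀ (by positivity : (0:ℝ) < (m ^ 2) ^ 2)]
            nlinarith
          linarith
        rw [e1, div_one, min_eq_left e3, min_self]
      · push_neg at hc
        set x := Real.sqrt (1 - m ^ 2 * (m - 1)) with hxdef
        have ha0 : 0 < 1 - m ^ 2 * (m - 1) := by
          nlinarith [sq_nonneg (m - 1), mul_pos hm0 (by linarith : (0:ℝ) < 2 - m ^ 2)]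
        have hx2 : x ^ 2 = 1 - m ^ 2 * (m - 1) := Real.sq_sqrt ha0.le
        have hx0 : 0 < x := Real.sqrt_pos.2 ha0
        refine ⟨x, 1, m, hx0, ?_, hm1, ?_, ?_⟩
        · -- x < 1 since x² < 1
          nlinarith [mul_pos (mul_pos hm0 hm0) (by linarith : (0:ℝ) < m - 1)]
        · -- m < x + 1, i.e. m - 1 < x, since (m-1)² < x²
          nlinarith [mul_pos hm0 (by linarith : (0:ℝ) < 2 - m ^ 2), hx0.le, hm1]
        · have e3 : (1:ℝ) ^ 2 - x ^ 2 = m ^ 2 * (m - 1) := by rw [hx2]; ring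
          have e4 : 1 + ((1:ℝ) ^ 2 - x ^ 2) / m ^ 2 = m := by
            rw [e3]
            field_simp
            ring
          have e5 : m ≤ 1 / x := by
            rw [le_div_iff₀ hx0]
            nlinarith [mul_pos hm0 hx0,
              mul_pos (show (0:ℝ) < m - 1 by linarith)
                (show (0:ℝ) < m ^ 4 - m - 1 by linarith)]
          rw [div_one, e4, min_eq_right e5, min_self]
  refine ⟨hset, ?_, ?_⟩
  · rw [hset]; exact isLUB_Ioo hs1
  · rw [hset]; simp
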